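/- Let 1 < M ≤ d+1 and let φ: ℝ → ℝ be increasing and convex, ψ: ℝ → ℝ be increasing with x ↦ ψ(α·φ(x)) convex for every α > 0. Consider the symmetric loss L_sym(U,V) = ½(L_c(U,V) + L_c(V,U)) where L_c(U,V) = (1/M) Σ_{i=1}^M ψ( Σ_{j≠i} φ((u_j − v_i)·u_i) ), minimized over all tuples U = (u_1,…,u_M), V = (v_1,…,v_M) of unit vectors in ℝ^d. Then every configuration with u_i = v_i for all i and ⟨u_i, u_j⟩ = −1/(M−1) for all i ≠ j attains the minimum of L_sym. -/
import Mathlib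


open scoped BigOperators RealInnerProductSpace

noncomputable section

/-- Generalised Decoupled Hyperspherical Energy Loss `L_c(U,V;φ,ψ)`: negatives come
only from the first view `U`. -/
def Lc (d M : ℕ) (φ ψ : ℝ → ℝ)
    (U V : Fin M → EuclideanSpace ℝ (Fin d)) : ℝ :=
  (1 / (M : ℝ)) * ∑ i, ψ (∑ j ∈ Finset.univ.erase i, φ ⟪U j - V i, U i⟫)

/-- Symmetrised loss `L_sym(U,V) = ½(L_c(U,V) + L_c(V,U))`. -/
def LcSym (d M : ℕ) (φ ψ : ℝ → ℝ)
    (U V : Fin M → EuclideanSpace ℝ (Fin d)) : ℝ :=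
  (Lc d M φ ψ U V + Lc d M φ ψ V U) / 2

private lemma key_lb (d M : ℕ) (hM : 1 < M)
    (φ ψ : ℝ → ℝ)
    (hφmono : Monotone φ) (hφconv : ConvexOn ℝ Set.univ φ)
    (hψmono : Monotone ψ)
    (hψφconv : ∀ α : ℝ, 0 < α → ConvexOn ℝ Set.univ (fun x => ψ (α * φ x)))
    (U V : Fin M → EuclideanSpace ℝ (Fin d))
    (hU : ∀ i, ‖U i‖ = 1) (hV : ∀ i, ‖V i‖ = 1) :
    ψ (((M : ℝ) - 1) * φ (-(M : ℝ) / ((M : ℝ) - 1))) ≤ Lc d M φ ψ U V := by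
  have hm2 : (2 : ℝ) ≤ (M : ℝ) := by exact_mod_cast hM
  have hm1 : (0 : ℝ) < (M : ℝ) - 1 := by linarith
  have hm0 : (0 : ℝ) < (M : ℝ) := by linarith
  have hcast : ((M - 1 : ℕ) : ℝ) = (M : ℝ) - 1 := by
    rw [Nat.cast_sub (by omega)]; simp
  have hcard : ∀ i : Fin M, ((Finset.univ.erase i).card : ℝ) = (M : ℝ) - 1 := by
    intro i
    rw [Finset.card_erase_of_mem (Finset.mem_univ i), Finset.card_univ, Fintype.card_fin, hcast]
  set t : Fin M → Fin M → ℝ := fun i j => ⟪U j - V i, U i⟫ with ht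
  set s : Fin M → ℝ := fun i => (∑ j ∈ Finset.univ.erase i, t i j) / ((M : ℝ) - 1) with hs
  -- Step A: inner Jensen
  have stepA : ∀ i, ((M : ℝ) - 1) * φ (s i) ≤ ∑ j ∈ Finset.univ.erase i, φ (t i j) := by
    intro i
    have hj := hφconv.map_sum_le (t := Finset.univ.erase i)
      (w := fun _ => 1 / ((M : ℝ) - 1)) (p := t i)
      (by intro j _; positivity)
      (by rw [Finset.sum_const, nsmul_eq_mul, hcard i, mul_one_div, div_self hm1.ne'])
      (by intro j _; trivial)
    simp only [smul_eq_mul] at hj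
    have h1 : ∑ j ∈ Finset.univ.erase i, 1 / ((M : ℝ) - 1) * t i j = s i := by
      rw [← Finset.mul_sum, hs]; ring
    rw [h1, ← Finset.mul_sum] at hj
    have h2 := mul_le_mul_of_nonneg_left hj hm1.le
    have h3 : ((M : ℝ) - 1) * (1 / ((M : ℝ) - 1) * ∑ j ∈ Finset.univ.erase i, φ (t i j))
        = ∑ j ∈ Finset.univ.erase i, φ (t i j) := by
      field_simp
    linarith
  -- diagonal inner products
  have hdiag : ∀ i, (⟪U i, U i⟫ : ℝ) = 1 := by
    intro i; rw [real_inner_self_eq_norm_mul_norm, hU i, one_mul]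
  have hVU : ∀ i, (⟪V i, U i⟫ : ℝ) ≤ 1 := by
    intro i
    have h := real_inner_le_norm (V i) (U i)
    rw [hU i, hV i] at h; simpa using h
  -- Step D preliminaries: total sum lower bound
  have hgram : (0 : ℝ) ≤ ∑ i, ∑ j, (⟪U j, U i⟫ : ℝ) := by
    have h : (⟪∑ j, U j, ∑ i, U i⟫ : ℝ) = ∑ i, ∑ j, (⟪U j, U i⟫ : ℝ) := by
      rw [inner_sum]; simp_rw [sum_inner]
    rw [← h]; exact real_inner_self_nonneg
  have hexp : ∀ i, ∑ j ∈ Finset.univ.erase i, t i j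
      = (∑ j, (⟪U j, U i⟫ : ℝ)) - 1 - ((M : ℝ) - 1) * ⟪V i, U i⟫ := by
    intro i
    have ht' : ∀ j ∈ Finset.univ.erase i, t i j = (⟪U j, U i⟫ : ℝ) - ⟪V i, U i⟫ := by
      intro j _; simp only [ht]; exact inner_sub_left _ _ _
    rw [Finset.sum_congr rfl ht', Finset.sum_sub_distrib,
      Finset.sum_erase_eq_sub (Finset.mem_univ i), hdiag i, Finset.sum_const,
      Finset.card_erase_of_mem (Finset.mem_univ i), Finset.card_univ, Fintype.card_fin,
      nsmul_eq_mul, hcast]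
  have hVsum : ∑ i, (⟪V i, U i⟫ : ℝ) ≤ (M : ℝ) := by
    calc ∑ i, (⟪V i, U i⟫ : ℝ) ≤ ∑ _i : Fin M, (1 : ℝ) :=
          Finset.sum_le_sum (fun i _ => hVU i)
      _ = (M : ℝ) := by simp
  have hS : -(M : ℝ) * (M : ℝ) ≤ ∑ i, ∑ j ∈ Finset.univ.erase i, t i j := by
    have h1 : ∑ i, ∑ j ∈ Finset.univ.erase i, t i j
        = (∑ i, ∑ j, (⟪U j, U i⟫ : ℝ)) - (M : ℝ)
          - ((M : ℝ) - 1) * ∑ i, (⟪V i, U i⟫ : ℝ) := by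
      rw [Finset.sum_congr rfl (fun i _ => hexp i)]
      rw [Finset.sum_sub_distrib, Finset.sum_sub_distrib, Finset.sum_const,
        Finset.card_univ, Fintype.card_fin, nsmul_eq_mul, mul_one, Finset.mul_sum]
    have h2 : ((M : ℝ) - 1) * ∑ i, (⟪V i, U i⟫ : ℝ) ≤ ((M : ℝ) - 1) * (M : ℝ) :=
      mul_le_mul_of_nonneg_left hVsum hm1.le
    nlinarith
  -- average bound
  have havg : -(M : ℝ) / ((M : ℝ) - 1) ≤ ∑ i, 1 / (M : ℝ) * s i := by
    have hsum : ∑ i, 1 / (M : ℝ) * s i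
        = (∑ i, ∑ j ∈ Finset.univ.erase i, t i j) / ((M : ℝ) * ((M : ℝ) - 1)) := by
      simp only [hs]
      rw [← Finset.mul_sum, ← Finset.sum_div]
      field_simp
    rw [hsum, div_le_div_iff₀ hm1 (by positivity)]
    nlinarith
  -- monotonicity of g
  have hgmono : ∀ x y : ℝ, x ≤ y →
      ψ (((M : ℝ) - 1) * φ x) ≤ ψ (((M : ℝ) - 1) * φ y) := by
    intro x y hxy
    exact hψmono (mul_le_mul_of_nonneg_left (hφmono hxy) hm1.le)
  -- Step C: outer Jensen
  have hg : ConvexOn ℝ Set.univ (fun x => ψ (((M : ℝ) - 1) * φ x)) := hψφconv _ hm1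
  have jensen2 := hg.map_sum_le (t := Finset.univ) (w := fun _ : Fin M => 1 / (M : ℝ))
    (p := s)
    (by intro i _; positivity)
    (by rw [Finset.sum_const, nsmul_eq_mul, Finset.card_univ, Fintype.card_fin,
          mul_one_div, div_self hm0.ne'])
    (by intro i _; trivial)
  simp only [smul_eq_mul] at jensen2
  -- chain everything
  have step1 : ψ (((M : ℝ) - 1) * φ (-(M : ℝ) / ((M : ℝ) - 1)))
      ≤ ψ (((M : ℝ) - 1) * φ (∑ i, 1 / (M : ℝ) * s i)) := hgmono _ _ havg
  have step2 : ψ (((M : ℝ) - 1) * φ (∑ i, 1 / (M : ℝ) * s i))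
      ≤ ∑ i, 1 / (M : ℝ) * ψ (((M : ℝ) - 1) * φ (s i)) := jensen2
  have step3 : ∑ i, 1 / (M : ℝ) * ψ (((M : ℝ) - 1) * φ (s i))
      ≤ ∑ i, 1 / (M : ℝ) * ψ (∑ j ∈ Finset.univ.erase i, φ (t i j)) := by
    apply Finset.sum_le_sum
    intro i _
    exact mul_le_mul_of_nonneg_left (hψmono (stepA i)) (by positivity)
  have hLc : Lc d M φ ψ U V
      = ∑ i, 1 / (M : ℝ) * ψ (∑ j ∈ Finset.univ.erase i, φ (t i j)) := by
    rw [Lc, Finset.mul_sum]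
  rw [hLc]
  linarith

theorem stmt_2 (d M : ℕ) (hM : 1 < M) (hMd : M ≤ d + 1)
    (φ ψ : ℝ → ℝ)
    (hφmono : Monotone φ) (hφconv : ConvexOn ℝ Set.univ φ)
    (hψmono : Monotone ψ)
    (hψφconv : ∀ α : ℝ, 0 < α → ConvexOn ℝ Set.univ (fun x => ψ (α * φ x))) :
    ∀ U V : Fin M → EuclideanSpace ℝ (Fin d),
      (∀ i, ‖U i‖ = 1) → (∀ i, ‖V i‖ = 1) →
      (∀ i, U i = V i) →
      (∀ i j, i ≠ j → ⟪U i, U j⟫ = -1 / ((M : ℝ) - 1)) →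
      ∀ U' V' : Fin M → EuclideanSpace ℝ (Fin d),
        (∀ i, ‖U' i‖ = 1) → (∀ i, ‖V' i‖ = 1) →
        LcSym d M φ ψ U V ≤ LcSym d M φ ψ U' V' := by
  intro U V hU hV hUV hsimp U' V' hU' hV'
  have hm2 : (2 : ℝ) ≤ (M : ℝ) := by exact_mod_cast hM
  have hm1 : (0 : ℝ) < (M : ℝ) - 1 := by linarith
  have hm0 : (0 : ℝ) < (M : ℝ) := by linarith
  have hUVf : U = V := funext hUV
  subst hUVf
  have hdiag : ∀ i, (⟪U i, U i⟫ : ℝ) = 1 := by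
    intro i; rw [real_inner_self_eq_norm_mul_norm, hU i, one_mul]
  have hcast : ((M - 1 : ℕ) : ℝ) = (M : ℝ) - 1 := by
    rw [Nat.cast_sub (by omega)]; simp
  have hval : Lc d M φ ψ U U = ψ (((M : ℝ) - 1) * φ (-(M : ℝ) / ((M : ℝ) - 1))) := by
    rw [Lc]
    have hterm : ∀ i : Fin M, ∀ j ∈ Finset.univ.erase i,
        φ (⟪U j - U i, U i⟫ : ℝ) = φ (-(M : ℝ) / ((M : ℝ) - 1)) := by
      intro i j hj
      have hji : j ≠ i := Finset.ne_of_mem_erase hj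
      have h1 : (⟪U j - U i, U i⟫ : ℝ) = ⟪U j, U i⟫ - ⟪U i, U i⟫ := inner_sub_left _ _ _
      rw [h1, hsimp j i hji, hdiag i]
      congr 1
      field_simp
      ring
    have hinner : ∀ i : Fin M,
        ∑ j ∈ Finset.univ.erase i, φ (⟪U j - U i, U i⟫ : ℝ)
          = ((M : ℝ) - 1) * φ (-(M : ℝ) / ((M : ℝ) - 1)) := by
      intro i
      rw [Finset.sum_congr rfl (hterm i), Finset.sum_const,
        Finset.card_erase_of_mem (Finset.mem_univ i), Finset.card_univ, Fintype.card_fin,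
        nsmul_eq_mul, hcast]
    rw [Finset.sum_congr rfl (fun i _ => by rw [hinner i]), Finset.sum_const,
      Finset.card_univ, Fintype.card_fin, nsmul_eq_mul]
    field_simp
  have k1 := key_lb d M hM φ ψ hφmono hφconv hψmono hψφconv U' V' hU' hV'
  have k2 := key_lb d M hM φ ψ hφmono hφconv hψmono hψφconv V' U' hV' hU'
  rw [LcSym, LcSym, hval]
  linarith
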